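/- Rate–MSE equivalence: let H ∈ ℂ^{N_R×N_R} and N ∈ ℂ^{N_R×N_R} Hermitian positive definite, and let U* = I - H^H(HH^H + N)^{-1}H be the MMSE matrix. Then U* is Hermitian positive definite and log₂ det(I + H H^H N^{-1}) = -log₂ det(U*). -/

import Mathlib

open scoped Matrix ComplexOrder

theorem rate_mse_equivalence
    {NR : ℕ} (H N : Matrix (Fin NR) (Fin NR) ℂ) (hN : N.PosDef) :
    (1 - Hᴴ * (H * Hᴴ + N)⁻¹ * H : Matrix (Fin NR) (Fin NR) ℂ).PosDef ∧
    Real.logb 2 ((1 + H * Hᴴ * N⁻¹ : Matrix (Fin NR) (Fin NR) ℂ).det.re)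
      = - Real.logb 2 ((1 - Hᴴ * (H * Hᴴ + N)⁻¹ * H : Matrix (Fin NR) (Fin NR) ℂ).det.re) := by
  set A : Matrix (Fin NR) (Fin NR) ℂ := H * Hᴴ + N with hAdef
  have hA : A.PosDef :=
    Matrix.PosDef.posSemidef_add (Matrix.posSemidef_self_mul_conjTranspose H) hN
  set B : Matrix (Fin NR) (Fin NR) ℂ := 1 + Hᴴ * N⁻¹ * H with hBdef
  have hB : B.PosDef := by
    have : (Hᴴ * N⁻¹ * H).PosSemidef := by
      simpa [Matrix.mul_assoc] using hN.inv.posSemidef.conjTranspose_mul_mul_same H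
    exact (Matrix.PosDef.one).add_posSemidef this
  have hNinv : N * N⁻¹ = 1 := Matrix.mul_nonsing_inv _ hN.det_pos.ne'.isUnit
  have hNinv' : N⁻¹ * N = 1 := Matrix.nonsing_inv_mul _ hN.det_pos.ne'.isUnit
  have hAinv : A * A⁻¹ = 1 := Matrix.mul_nonsing_inv _ hA.det_pos.ne'.isUnit
  have hAinv' : A⁻¹ * A = 1 := Matrix.nonsing_inv_mul _ hA.det_pos.ne'.isUnit
  have hHH : H * Hᴴ = A - N := by rw [hAdef, add_sub_cancel_right]
  have hmid : N⁻¹ * (H * Hᴴ) * A⁻¹ = N⁻¹ - A⁻¹ := by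
    rw [hHH, Matrix.mul_sub, hNinv', Matrix.sub_mul, Matrix.one_mul, Matrix.mul_assoc,
      hAinv, Matrix.mul_one]
  -- key identity : B * (1 - Hᴴ A⁻¹ H) = 1
  have hkey : B * (1 - Hᴴ * A⁻¹ * H) = 1 := by
    have e : (Hᴴ * N⁻¹ * H) * (Hᴴ * A⁻¹ * H) = Hᴴ * (N⁻¹ * (H * Hᴴ) * A⁻¹) * H := by
      noncomm_ring
    have e2 : (Hᴴ * N⁻¹ * H) * (Hᴴ * A⁻¹ * H) = Hᴴ * N⁻¹ * H - Hᴴ * A⁻¹ * H := by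
      rw [e, hmid, Matrix.mul_sub, Matrix.sub_mul]
    rw [hBdef, Matrix.add_mul, Matrix.one_mul, Matrix.mul_sub, Matrix.mul_one, e2]
    abel
  have hU : (1 - Hᴴ * A⁻¹ * H) = B⁻¹ := (Matrix.inv_eq_right_inv hkey).symm
  have hUpos : (1 - Hᴴ * A⁻¹ * H).PosDef := hU ▸ hB.inv
  refine ⟨hUpos, ?_⟩
  -- determinants
  have hdetB : B.det = N⁻¹.det * A.det := by
    have h3 : (N⁻¹ * A) = 1 + N⁻¹ * H * Hᴴ := by
      rw [hAdef, Matrix.mul_add, hNinv', Matrix.mul_assoc, add_comm]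
    calc B.det = (1 + N⁻¹ * H * Hᴴ).det := by
          rw [hBdef, Matrix.mul_assoc, Matrix.det_one_add_mul_comm]
      _ = (N⁻¹ * A).det := by rw [h3]
      _ = N⁻¹.det * A.det := Matrix.det_mul _ _
  have hdetL : (1 + H * Hᴴ * N⁻¹).det = B.det := by
    have h4 : (A * N⁻¹) = 1 + H * Hᴴ * N⁻¹ := by
      rw [hAdef, Matrix.add_mul, hNinv, add_comm]
    rw [← h4, Matrix.det_mul, hdetB]; ring
  have hdetU : (1 - Hᴴ * A⁻¹ * H).det = (B.det)⁻¹ := by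
    rw [hU, Matrix.det_nonsing_inv, Ring.inverse_eq_inv]
  -- positivity / realness
  have hBpos : (0 : ℂ) < B.det := hB.det_pos
  rw [Complex.lt_def] at hBpos
  have hBre : 0 < B.det.re := by simpa using hBpos.1
  have hBim : B.det.im = 0 := by simpa using hBpos.2.symm
  have hUre : (1 - Hᴴ * A⁻¹ * H).det.re = (B.det.re)⁻¹ := by
    rw [hdetU, Complex.inv_re, Complex.normSq_apply, hBim]
    field_simp
    ring
  rw [hdetL, hUre, Real.logb, Real.logb, Real.log_inv]
  ring
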